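/- Let ν be a measure on ℝ with ν({0}) = 0 and ∫ min(1, x²) ν(dx) < ∞. Define the Blumenthal–Getoor exponent β := inf{δ ∈ ℝ : δ > 0 and ∫_{|x|≤1} |x|^δ ν(dx) < ∞}, and for j ∈ ℕ set ν_j := ν({x ∈ ℝ : 2^{-j} ≤ |x| < 2^{-(j-1)}}). Then: (i) there exists a constant C < ∞ such that ν_j ≤ C·8^j for every j ∈ ℕ; (ii) for every real γ with 0 ≤ γ < β, the set {j ∈ ℕ : ν_j ≥ 2^{jγ}} is infinite. -/

import Mathlib

open MeasureTheory
open scoped ENNReal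

set_option maxHeartbeats 1000000

lemma cover_lemma (x : ℝ) (hx : x ≠ 0) (hx1 : |x| ≤ 1) :
    ∃ j : ℕ, (2:ℝ) ^ (-(j:ℤ)) ≤ |x| ∧ |x| < (2:ℝ) ^ (1 - (j:ℤ)) := by
  obtain ⟨n, hn1, hn2⟩ := exists_mem_Ico_zpow (abs_pos.2 hx) (one_lt_two (α := ℝ))
  have hn0 : n ≤ 0 := by
    by_contra h
    push_neg at h
    have h1 : (2:ℝ) ^ (1:ℤ) ≤ 2 ^ n := zpow_le_zpow_right₀ one_le_two (by omega)
    simp only [zpow_one] at h1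
    linarith
  refine ⟨(-n).toNat, ?_, ?_⟩
  · rwa [Int.toNat_of_nonneg (by omega), neg_neg]
  · have h : (1 : ℤ) - ((-n).toNat : ℤ) = n + 1 := by
      rw [Int.toNat_of_nonneg (by omega)]; ring
    rw [h]; exact hn2

/-- **Estimates on `ν_j = ν(Γ_j)` for a Lévy measure `ν`.**
Let `ν` be a measure on `ℝ` with `ν {0} = 0` and `∫ min(1, x²) ν(dx) < ∞`, let
`β := inf {δ > 0 : ∫_{|x|≤1} |x|^δ ν(dx) < ∞}` be the Blumenthal–Getoor exponent and
`ν_j := ν {x : 2^{-j} ≤ |x| < 2^{-(j-1)}}`. Then (i) `ν_j ≤ C·8^j` for some finite `C`,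
and (ii) for every `0 ≤ γ < β` the set `{j : ν_j ≥ 2^{jγ}}` is infinite. -/
theorem stmt_17 (ν : Measure ℝ) (hν0 : ν {0} = 0)
    (hν : ∫⁻ x, ENNReal.ofReal (min 1 (x ^ 2)) ∂ν < ⊤) :
    (∃ C : ℝ≥0∞, C < ⊤ ∧ ∀ j : ℕ,
      ν {x : ℝ | (2 : ℝ) ^ (-(j : ℤ)) ≤ |x| ∧ |x| < (2 : ℝ) ^ (1 - (j : ℤ))} ≤
        C * 8 ^ j) ∧
    (∀ γ : ℝ, 0 ≤ γ →
      γ < sInf {δ : ℝ | 0 < δ ∧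
        ∫⁻ x in {x : ℝ | |x| ≤ 1}, ENNReal.ofReal (|x| ^ δ) ∂ν < ⊤} →
      {j : ℕ | ENNReal.ofReal ((2 : ℝ) ^ ((j : ℝ) * γ)) ≤
        ν {x : ℝ | (2 : ℝ) ^ (-(j : ℤ)) ≤ |x| ∧
          |x| < (2 : ℝ) ^ (1 - (j : ℤ))}}.Infinite) := by
  have hA : ∀ j : ℕ,
      ν {x : ℝ | (2 : ℝ) ^ (-(j : ℤ)) ≤ |x| ∧ |x| < (2 : ℝ) ^ (1 - (j : ℤ))} ≤
        4 ^ j * ∫⁻ x, ENNReal.ofReal (min 1 (x ^ 2)) ∂ν := by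
    intro j
    set Γ : Set ℝ := {x : ℝ | (2 : ℝ) ^ (-(j : ℤ)) ≤ |x| ∧ |x| < (2 : ℝ) ^ (1 - (j : ℤ))}
    have hpt : ∀ x ∈ Γ, ENNReal.ofReal (((4:ℝ)^j)⁻¹) ≤ ENNReal.ofReal (min 1 (x ^ 2)) := by
      intro x hx
      apply ENNReal.ofReal_le_ofReal
      have h1 : ((2:ℝ)^j)⁻¹ ≤ |x| := by
        have := hx.1
        rwa [zpow_neg, zpow_natCast] at this
      have h2 : (0:ℝ) < ((2:ℝ)^j)⁻¹ := by positivity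
      have h3 : (((2:ℝ)^j)⁻¹)^2 ≤ |x|^2 := by
        apply pow_le_pow_left₀ h2.le h1
      have h4 : (((2:ℝ)^j)⁻¹)^2 = ((4:ℝ)^j)⁻¹ := by
        rw [← inv_pow, ← pow_mul, mul_comm, pow_mul]; norm_num [div_pow]
      rw [sq_abs] at h3
      rw [h4] at h3
      have h5 : ((4:ℝ)^j)⁻¹ ≤ 1 := by
        rw [inv_le_one_iff₀]; right; exact one_le_pow₀ (by norm_num)
      exact le_min h5 h3
    have hconst : ENNReal.ofReal (((4:ℝ)^j)⁻¹) * ν Γ ≤ ∫⁻ x, ENNReal.ofReal (min 1 (x ^ 2)) ∂ν := by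
      calc ENNReal.ofReal (((4:ℝ)^j)⁻¹) * ν Γ
          = ∫⁻ _ in Γ, ENNReal.ofReal (((4:ℝ)^j)⁻¹) ∂ν := (setLIntegral_const _ _).symm
        _ ≤ ∫⁻ x in Γ, ENNReal.ofReal (min 1 (x ^ 2)) ∂ν := setLIntegral_mono (by fun_prop) hpt
        _ ≤ _ := setLIntegral_le_lintegral _ _
    have hc : ENNReal.ofReal (((4:ℝ)^j)⁻¹) = ((4:ℝ≥0∞)^j)⁻¹ := by
      rw [ENNReal.ofReal_inv_of_pos (by positivity), ENNReal.ofReal_pow (by norm_num)]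
      norm_num
    rw [hc] at hconst
    have h4j : ((4:ℝ≥0∞)^j) ≠ 0 := by positivity
    have h4jt : ((4:ℝ≥0∞)^j) ≠ ⊤ := by
      exact ENNReal.pow_ne_top (by norm_num)
    calc ν Γ = (4:ℝ≥0∞)^j * (((4:ℝ≥0∞)^j)⁻¹ * ν Γ) := by
          rw [← mul_assoc, ENNReal.mul_inv_cancel h4j h4jt, one_mul]
      _ ≤ 4 ^ j * ∫⁻ x, ENNReal.ofReal (min 1 (x ^ 2)) ∂ν := by
            exact mul_le_mul_right hconst _
  constructor
  · refine ⟨∫⁻ x, ENNReal.ofReal (min 1 (x ^ 2)) ∂ν, hν, fun j => ?_⟩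
    calc ν {x : ℝ | (2 : ℝ) ^ (-(j : ℤ)) ≤ |x| ∧ |x| < (2 : ℝ) ^ (1 - (j : ℤ))}
        ≤ 4 ^ j * ∫⁻ x, ENNReal.ofReal (min 1 (x ^ 2)) ∂ν := hA j
      _ = (∫⁻ x, ENNReal.ofReal (min 1 (x ^ 2)) ∂ν) * 4 ^ j := mul_comm _ _
      _ ≤ (∫⁻ x, ENNReal.ofReal (min 1 (x ^ 2)) ∂ν) * 8 ^ j :=
          mul_le_mul_right (pow_le_pow_left₀ zero_le (by norm_num) j) _
  · intro γ hγ0 hγβ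
    set S := {δ : ℝ | 0 < δ ∧
          ∫⁻ x in {x : ℝ | |x| ≤ 1}, ENNReal.ofReal (|x| ^ δ) ∂ν < ⊤} with hS
    set Γ : ℕ → Set ℝ :=
      fun j => {x : ℝ | (2 : ℝ) ^ (-(j : ℤ)) ≤ |x| ∧ |x| < (2 : ℝ) ^ (1 - (j : ℤ))} with hΓ
    by_contra hfin
    rw [Set.not_infinite] at hfin
    obtain ⟨N, hN⟩ := hfin.bddAbove
    have hsmall : ∀ j : ℕ, N + 1 ≤ j →
        ν (Γ j) ≤ ENNReal.ofReal ((2 : ℝ) ^ ((j : ℝ) * γ)) := by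
      intro j hj
      have : j ∉ {j : ℕ | ENNReal.ofReal ((2 : ℝ) ^ ((j : ℝ) * γ)) ≤ ν (Γ j)} := by
        intro hmem
        exact absurd (hN hmem) (by omega)
      exact le_of_not_ge this
    -- choose δ
    set δ : ℝ := (γ + sInf S) / 2 with hδ
    have hδγ : γ < δ := by simp only [hδ]; linarith
    have hδβ : δ < sInf S := by simp only [hδ]; linarith
    have hδ0 : 0 < δ := lt_of_le_of_lt hγ0 hδγ
    -- finiteness of each ν (Γ j)
    have hνfin : ∀ j, ν (Γ j) < ⊤ := fun j =>
      lt_of_le_of_lt (hA j) (ENNReal.mul_lt_top (ENNReal.pow_lt_top (by norm_num)) hν)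
    -- the bound b j
    set b : ℕ → ℝ≥0∞ := fun j => ENNReal.ofReal (((2:ℝ) ^ (1 - (j:ℤ))) ^ δ) * ν (Γ j) with hb
    have hΓmeas : ∀ j, MeasurableSet (Γ j) := by
      intro j
      exact (measurableSet_le measurable_const measurable_abs).inter
        (measurableSet_lt measurable_abs measurable_const)
    -- step 1 : integral ≤ tsum b
    have step1 : ∫⁻ x in {x : ℝ | |x| ≤ 1}, ENNReal.ofReal (|x| ^ δ) ∂ν ≤ ∑' j, b j := by
      have hsub : {x : ℝ | |x| ≤ 1} ⊆ {(0:ℝ)} ∪ ⋃ j, Γ j := by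
        intro x hx
        rcases eq_or_ne x 0 with h | h
        · exact Or.inl h
        · exact Or.inr (Set.mem_iUnion.2 (cover_lemma x h hx))
      calc ∫⁻ x in {x : ℝ | |x| ≤ 1}, ENNReal.ofReal (|x| ^ δ) ∂ν
          ≤ ∫⁻ x in {(0:ℝ)} ∪ ⋃ j, Γ j, ENNReal.ofReal (|x| ^ δ) ∂ν :=
            lintegral_mono_set hsub
        _ ≤ (∫⁻ x in {(0:ℝ)}, ENNReal.ofReal (|x| ^ δ) ∂ν) +
            ∫⁻ x in ⋃ j, Γ j, ENNReal.ofReal (|x| ^ δ) ∂ν := lintegral_union_le _ _ _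
        _ ≤ 0 + ∑' j, ∫⁻ x in Γ j, ENNReal.ofReal (|x| ^ δ) ∂ν := by
            gcongr
            · exact le_of_eq (setLIntegral_measure_zero _ _ hν0)
            · exact lintegral_iUnion_le _ _
        _ ≤ ∑' j, b j := by
            rw [zero_add]
            apply ENNReal.tsum_le_tsum
            intro j
            have hpt : ∀ x ∈ Γ j, ENNReal.ofReal (|x| ^ δ) ≤
                ENNReal.ofReal (((2:ℝ) ^ (1 - (j:ℤ))) ^ δ) := by
              intro x hx
              apply ENNReal.ofReal_le_ofReal
              exact Real.rpow_le_rpow (abs_nonneg x) hx.2.le hδ0.le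
            calc ∫⁻ x in Γ j, ENNReal.ofReal (|x| ^ δ) ∂ν
                ≤ ∫⁻ _ in Γ j, ENNReal.ofReal (((2:ℝ) ^ (1 - (j:ℤ))) ^ δ) ∂ν :=
                  setLIntegral_mono measurable_const hpt
              _ = b j := setLIntegral_const _ _
    -- step 2 : tsum b < ⊤
    have hbfin : ∀ j, b j < ⊤ := fun j =>
      ENNReal.mul_lt_top ENNReal.ofReal_lt_top (hνfin j)
    set r : ℝ≥0∞ := ENNReal.ofReal ((2:ℝ) ^ (γ - δ)) with hr
    have hr1 : r < 1 := by
      rw [hr, ← ENNReal.ofReal_one]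
      apply ENNReal.ofReal_lt_ofReal_iff_of_nonneg (by positivity) |>.2
      calc (2:ℝ) ^ (γ - δ) < 2 ^ (0:ℝ) :=
            Real.rpow_lt_rpow_of_exponent_lt one_lt_two (by linarith)
        _ = 1 := Real.rpow_zero 2
    have hrt : r ≠ ⊤ := ENNReal.ofReal_ne_top
    have key : ∀ j : ℕ, N + 1 ≤ j → b j ≤ ENNReal.ofReal ((2:ℝ) ^ δ) * r ^ j := by
      intro j hj
      have h1 : b j ≤ ENNReal.ofReal (((2:ℝ) ^ (1 - (j:ℤ))) ^ δ) *
          ENNReal.ofReal ((2 : ℝ) ^ ((j : ℝ) * γ)) :=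
        mul_le_mul_right (hsmall j hj) _
      have h2 : ((2:ℝ) ^ (1 - (j:ℤ))) ^ δ * (2 : ℝ) ^ ((j : ℝ) * γ) =
          (2:ℝ) ^ δ * ((2:ℝ) ^ (γ - δ)) ^ j := by
        have e1 : (2:ℝ) ^ (1 - (j:ℤ)) = (2:ℝ) ^ ((1 - (j:ℝ)) : ℝ) := by
          rw [show ((1 - (j:ℝ)) : ℝ) = (((1 - (j:ℤ)) : ℤ) : ℝ) by push_cast; ring,
            Real.rpow_intCast]
        rw [e1, ← Real.rpow_natCast ((2:ℝ) ^ (γ - δ)) j, ← Real.rpow_mul (by norm_num),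
          ← Real.rpow_mul (by norm_num), ← Real.rpow_add (by norm_num),
          ← Real.rpow_add (by norm_num)]
        ring_nf
      calc b j ≤ ENNReal.ofReal (((2:ℝ) ^ (1 - (j:ℤ))) ^ δ) *
          ENNReal.ofReal ((2 : ℝ) ^ ((j : ℝ) * γ)) := h1
        _ = ENNReal.ofReal (((2:ℝ) ^ (1 - (j:ℤ))) ^ δ * (2 : ℝ) ^ ((j : ℝ) * γ)) :=
            (ENNReal.ofReal_mul (by positivity)).symm
        _ = ENNReal.ofReal ((2:ℝ) ^ δ * ((2:ℝ) ^ (γ - δ)) ^ j) := by rw [h2]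
        _ = ENNReal.ofReal ((2:ℝ) ^ δ) * r ^ j := by
            rw [ENNReal.ofReal_mul (by positivity), ENNReal.ofReal_pow (by positivity)]
    set B := ∑ i ∈ Finset.range (N+1), b i with hB
    have hBfin : B < ⊤ := ENNReal.sum_lt_top.2 fun i _ => hbfin i
    have hr0 : r ≠ 0 := by
      rw [hr, Ne, ENNReal.ofReal_eq_zero, not_le]
      positivity
    have hrN : r ^ N ≠ 0 := pow_ne_zero _ hr0
    have hrNt : r ^ N ≠ ⊤ := ENNReal.pow_ne_top hrt
    set K := B / r ^ N + ENNReal.ofReal ((2:ℝ) ^ δ) with hK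
    have hKfin : K < ⊤ :=
      ENNReal.add_lt_top.2 ⟨ENNReal.div_lt_top hBfin.ne hrN, ENNReal.ofReal_lt_top⟩
    have hglobal : ∀ j, b j ≤ K * r ^ j := by
      intro j
      rcases le_or_gt j N with hj | hj
      · have h1 : b j ≤ B :=
          Finset.single_le_sum (f := b) (fun i _ => zero_le) (Finset.mem_range.2 (by omega))
        have h3 : r ^ N ≤ r ^ j := by
          calc r ^ N = r ^ j * r ^ (N - j) := by rw [← pow_add]; congr 1; omega
            _ ≤ r ^ j * 1 := mul_le_mul_right (pow_le_one' hr1.le _) _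
            _ = r ^ j := mul_one _
        calc b j ≤ B := h1
          _ = (B / r ^ N) * r ^ N := (ENNReal.div_mul_cancel hrN hrNt).symm
          _ ≤ (B / r ^ N) * r ^ j := mul_le_mul_right h3 _
          _ ≤ K * r ^ j := mul_le_mul_left le_self_add _
      · calc b j ≤ ENNReal.ofReal ((2:ℝ) ^ δ) * r ^ j := key j (by omega)
          _ ≤ K * r ^ j := mul_le_mul_left le_add_self _
    have hsum : ∑' j, b j < ⊤ := by
      calc ∑' j, b j ≤ ∑' j, K * r ^ j := ENNReal.tsum_le_tsum hglobal
        _ = K * (1 - r)⁻¹ := by rw [ENNReal.tsum_mul_left, ENNReal.tsum_geometric]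
        _ < ⊤ := ENNReal.mul_lt_top hKfin
            (by rw [ENNReal.inv_lt_top]; exact tsub_pos_of_lt hr1)
    -- conclude
    have hδS : δ ∈ S := ⟨hδ0, lt_of_le_of_lt step1 hsum⟩
    have hBdd : BddBelow S := ⟨0, fun d hd => hd.1.le⟩
    exact absurd (csInf_le hBdd hδS) (not_le.2 hδβ)
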